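/- Let φ₀ be a real constant and let m₁, m₂, m₃, α : ℝ → ℝ satisfy the principal-line Darboux system with f ≡ 0, namely m₁' = m₂·cos α + m₃·sin α, m₂' = −m₁·cos α, m₃' = −m₁·sin α on ℝ, where m₁, m₂, m₃ are differentiable and α is differentiable with α'(θ) = φ₀ for all θ. Then m₁ is three times differentiable and satisfies m₁''' + (1 + φ₀²)·m₁' = 0 on ℝ. -/

import Mathlib

/-- Principal-line case with `f ≡ 0` and helix condition `α' = φ₀`:
`m₁` satisfies `m₁''' + (1 + φ₀²) m₁' = 0`. -/
theorem principal_helix_third_order_ode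
    (φ₀ : ℝ) (m₁ m₂ m₃ α : ℝ → ℝ)
    (hm₁ : Differentiable ℝ m₁) (hm₂ : Differentiable ℝ m₂)
    (hm₃ : Differentiable ℝ m₃)
    (hα : Differentiable ℝ α) (hα' : ∀ θ, deriv α θ = φ₀)
    (h1 : ∀ θ, deriv m₁ θ = m₂ θ * Real.cos (α θ) + m₃ θ * Real.sin (α θ))
    (h2 : ∀ θ, deriv m₂ θ = -(m₁ θ) * Real.cos (α θ))
    (h3 : ∀ θ, deriv m₃ θ = -(m₁ θ) * Real.sin (α θ)) :
    Differentiable ℝ (deriv m₁) ∧ Differentiable ℝ (deriv (deriv m₁)) ∧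
      ∀ θ, deriv (deriv (deriv m₁)) θ + (1 + φ₀ ^ 2) * deriv m₁ θ = 0 := by
  set F : ℝ → ℝ := fun θ => m₂ θ * Real.cos (α θ) + m₃ θ * Real.sin (α θ) with hF
  set G : ℝ → ℝ := fun θ =>
    -(m₁ θ) + φ₀ * (m₃ θ * Real.cos (α θ) - m₂ θ * Real.sin (α θ)) with hG
  have hαd : ∀ θ, HasDerivAt α φ₀ θ := fun θ => (hα' θ) ▸ (hα θ).hasDerivAt
  have hcos : ∀ θ, HasDerivAt (fun θ => Real.cos (α θ)) (-Real.sin (α θ) * φ₀) θ :=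
    fun θ => (hαd θ).cos
  have hsin : ∀ θ, HasDerivAt (fun θ => Real.sin (α θ)) (Real.cos (α θ) * φ₀) θ :=
    fun θ => (hαd θ).sin
  have hm1d : ∀ θ, HasDerivAt m₁ (F θ) θ := fun θ => by
    have h := (hm₁ θ).hasDerivAt; rwa [h1 θ] at h
  have hm2d : ∀ θ, HasDerivAt m₂ (-(m₁ θ) * Real.cos (α θ)) θ :=
    fun θ => (h2 θ) ▸ (hm₂ θ).hasDerivAt
  have hm3d : ∀ θ, HasDerivAt m₃ (-(m₁ θ) * Real.sin (α θ)) θ :=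
    fun θ => (h3 θ) ▸ (hm₃ θ).hasDerivAt
  have hFd : ∀ θ, HasDerivAt F (G θ) θ := by
    intro θ
    have := ((hm2d θ).mul (hcos θ)).add ((hm3d θ).mul (hsin θ))
    refine this.congr_deriv (Eq.symm ?_)
    have := Real.sin_sq_add_cos_sq (α θ)
    simp only [hG]
    linear_combination (m₁ θ) * this
  have hGd : ∀ θ, HasDerivAt G (-(F θ) - φ₀ ^ 2 * F θ) θ := by
    intro θ
    have := ((hm1d θ).neg).add
      ((((hm3d θ).mul (hcos θ)).sub ((hm2d θ).mul (hsin θ))).const_mul φ₀)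
    refine this.congr_deriv (Eq.symm ?_)
    simp only [hF]
    ring
  have hdm1 : deriv m₁ = F := funext fun θ => h1 θ
  have hFdiff : Differentiable ℝ F := fun θ => (hFd θ).differentiableAt
  have hdF : deriv F = G := funext fun θ => (hFd θ).deriv
  have hGdiff : Differentiable ℝ G := fun θ => (hGd θ).differentiableAt
  refine ⟨hdm1 ▸ hFdiff, ?_, ?_⟩
  · rw [hdm1, hdF]; exact hGdiff
  · intro θ
    rw [hdm1, hdF, (hGd θ).deriv]
    ring
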